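/- Let n ≥ 2, let Γ, Λ ⊆ ℝⁿ and let T : ℝⁿ → ℝⁿ be an invertible continuous linear map with adjoint T* (with respect to the Euclidean inner product). Then (Γ, Λ) is a Heisenberg uniqueness pair if and only if (T⁻¹(Γ), T*(Λ)) is a Heisenberg uniqueness pair, where T⁻¹(Γ) is the preimage of Γ under T and T*(Λ) is the image of Λ under T*. -/

import Mathlib

open MeasureTheory

/-- The `(n-1)`-dimensional Hausdorff measure restricted to `Γ ⊆ ℝⁿ`. -/
noncomputable def surfMeasure (n : ℕ) (Γ : Set (EuclideanSpace ℝ (Fin n))) :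
    Measure (EuclideanSpace ℝ (Fin n)) :=
  (μH[(n : ℝ) - 1]).restrict Γ

/-- `(Γ, Λ)` is a Heisenberg uniqueness pair. -/
def IsHUP (n : ℕ) (Γ Λ : Set (EuclideanSpace ℝ (Fin n))) : Prop :=
  ∀ f : EuclideanSpace ℝ (Fin n) → ℂ,
    Integrable f (surfMeasure n Γ) →
    (∀ ξ ∈ Λ, ∫ x, Complex.exp (-Complex.I * ((inner ℝ ξ x : ℝ) : ℂ)) * f x
        ∂(surfMeasure n Γ) = 0) →
    f =ᵐ[surfMeasure n Γ] 0

open Measure Set ContinuousLinearMap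
open scoped ENNReal NNReal

theorem hup_aux (n : ℕ) (hn : 2 ≤ n) (Γ Λ : Set (EuclideanSpace ℝ (Fin n)))
    (T : EuclideanSpace ℝ (Fin n) ≃L[ℝ] EuclideanSpace ℝ (Fin n))
    (h : IsHUP n Γ Λ) :
    IsHUP n ((T : EuclideanSpace ℝ (Fin n) → EuclideanSpace ℝ (Fin n)) ⁻¹' Γ)
      (⇑(ContinuousLinearMap.adjoint
          (T : EuclideanSpace ℝ (Fin n) →L[ℝ] EuclideanSpace ℝ (Fin n))) '' Λ) := by
  classical
  have hd : (0:ℝ) ≤ (n:ℝ) - 1 := by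
    have : (1:ℝ) ≤ (n:ℝ) := by exact_mod_cast le_trans one_le_two hn
    linarith
  intro f hf hvan
  set d : ℝ := (n:ℝ) - 1 with hd_def
  set μ' : Measure (EuclideanSpace ℝ (Fin n)) := surfMeasure n (⇑T ⁻¹' Γ) with hμ'
  set μΓ : Measure (EuclideanSpace ℝ (Fin n)) := surfMeasure n Γ with hμΓ
  have hTmeas : Measurable (⇑T) := T.continuous.measurable
  have hTsymm_meas : Measurable (⇑T.symm) := T.symm.continuous.measurable
  -- sigma-finite support
  have hfin := hf.aefinStronglyMeasurable
  set S : Set (EuclideanSpace ℝ (Fin n)) := hfin.sigmaFiniteSet with hS_def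
  have hS : MeasurableSet S := hfin.measurableSet
  haveI : SigmaFinite (μ'.restrict S) := hfin.sigmaFinite_restrict
  have hf_compl : f =ᵐ[μ'.restrict Sᶜ] 0 := hfin.ae_eq_zero_compl
  -- image set
  set S' : Set (EuclideanSpace ℝ (Fin n)) := ⇑T.symm ⁻¹' S with hS'_def
  have hS' : MeasurableSet S' := hTsymm_meas hS
  have hpreS' : ⇑T ⁻¹' S' = S := by
    ext x; simp [hS'_def]
  set ν : Measure (EuclideanSpace ℝ (Fin n)) := (μ'.restrict S).map ⇑T with hν_def
  haveI : SigmaFinite ν :=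
    (T.toHomeomorph.toMeasurableEquiv).sigmaFinite_map (μ := μ'.restrict S)
  have hν_apply : ∀ A : Set (EuclideanSpace ℝ (Fin n)), MeasurableSet A →
      ν A = μH[d] (⇑T ⁻¹' A ∩ S ∩ ⇑T ⁻¹' Γ) := by
    intro A hA
    rw [hν_def, Measure.map_apply hTmeas hA, Measure.restrict_apply (hTmeas hA), hμ',
      surfMeasure, Measure.restrict_apply ((hTmeas hA).inter hS)]
  have hμΓ_apply : ∀ A : Set (EuclideanSpace ℝ (Fin n)), MeasurableSet A →
      μΓ A = μH[d] (A ∩ Γ) := fun A hA => by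
    rw [hμΓ, surfMeasure, Measure.restrict_apply hA]
  -- Hausdorff measure comparison
  set c₁ : ℝ≥0∞ := (‖(T.symm : EuclideanSpace ℝ (Fin n) →L[ℝ] EuclideanSpace ℝ (Fin n))‖₊ : ℝ≥0∞) ^ d with hc₁
  set c₂ : ℝ≥0∞ := (‖(T : EuclideanSpace ℝ (Fin n) →L[ℝ] EuclideanSpace ℝ (Fin n))‖₊ : ℝ≥0∞) ^ d with hc₂
  have hHsymm : ∀ A : Set (EuclideanSpace ℝ (Fin n)), μH[d] (⇑T ⁻¹' A) ≤ c₁ * μH[d] A := by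
    intro A
    have := (T.symm : EuclideanSpace ℝ (Fin n) →L[ℝ]
      EuclideanSpace ℝ (Fin n)).lipschitz.hausdorffMeasure_image_le hd A
    rwa [show ⇑(T.symm : EuclideanSpace ℝ (Fin n) →L[ℝ] EuclideanSpace ℝ (Fin n)) '' A
      = ⇑T ⁻¹' A from T.image_symm_eq_preimage A] at this
  have hHT : ∀ A : Set (EuclideanSpace ℝ (Fin n)), μH[d] (⇑T '' A) ≤ c₂ * μH[d] A := fun A =>
    (T : EuclideanSpace ℝ (Fin n) →L[ℝ]
      EuclideanSpace ℝ (Fin n)).lipschitz.hausdorffMeasure_image_le hd A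
  have hν_ac : ν ≪ μΓ := by
    refine Measure.AbsolutelyContinuous.mk fun A hA hA0 => ?_
    rw [hμΓ_apply A hA] at hA0
    rw [hν_apply A hA]
    have hsub : ⇑T ⁻¹' A ∩ S ∩ ⇑T ⁻¹' Γ ⊆ ⇑T ⁻¹' (A ∩ Γ) := fun x hx => ⟨hx.1.1, hx.2⟩
    refine le_antisymm ?_ zero_le
    calc μH[d] (⇑T ⁻¹' A ∩ S ∩ ⇑T ⁻¹' Γ) ≤ μH[d] (⇑T ⁻¹' (A ∩ Γ)) := measure_mono hsub
      _ ≤ c₁ * μH[d] (A ∩ Γ) := hHsymm _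
      _ = 0 := by rw [hA0, mul_zero]
  set μ₀ : Measure (EuclideanSpace ℝ (Fin n)) := μΓ.restrict S' with hμ₀_def
  have hμ₀_le : ∀ A : Set (EuclideanSpace ℝ (Fin n)), MeasurableSet A → μ₀ A ≤ c₂ * ν A := by
    intro A hA
    rw [hμ₀_def, Measure.restrict_apply hA, hμΓ_apply _ (hA.inter hS'), hν_apply A hA]
    have h1 : A ∩ S' ∩ Γ = ⇑T '' (⇑T ⁻¹' (A ∩ S' ∩ Γ)) :=
      (Set.image_preimage_eq _ T.surjective).symm
    have h2 : ⇑T ⁻¹' (A ∩ S' ∩ Γ) ⊆ ⇑T ⁻¹' A ∩ S ∩ ⇑T ⁻¹' Γ := by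
      intro x hx
      refine ⟨⟨hx.1.1, ?_⟩, hx.2⟩
      have := hx.1.2
      rwa [← hpreS']
    calc μH[d] (A ∩ S' ∩ Γ) = μH[d] (⇑T '' (⇑T ⁻¹' (A ∩ S' ∩ Γ))) := by rw [← h1]
      _ ≤ c₂ * μH[d] (⇑T ⁻¹' (A ∩ S' ∩ Γ)) := hHT _
      _ ≤ c₂ * μH[d] (⇑T ⁻¹' A ∩ S ∩ ⇑T ⁻¹' Γ) := by
          exact mul_le_mul_right (measure_mono h2) _
  have hc₂_ne : c₂ ≠ ∞ := by
    rw [hc₂]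
    exact (ENNReal.rpow_lt_top_of_nonneg hd ENNReal.coe_ne_top).ne
  haveI : SigmaFinite μ₀ := by
    refine ⟨⟨⟨fun k => spanningSets ν k, fun _ => trivial, fun k => ?_,
      iUnion_spanningSets ν⟩⟩⟩
    calc μ₀ (spanningSets ν k) ≤ c₂ * ν (spanningSets ν k) :=
          hμ₀_le _ (measurableSet_spanningSets ν k)
      _ < ∞ := ENNReal.mul_lt_top hc₂_ne.lt_top (measure_spanningSets_lt_top ν k)
  have hν_S'c : ν S'ᶜ = 0 := by
    rw [hν_apply _ hS'.compl]
    have hsub : ⇑T ⁻¹' S'ᶜ ∩ S ∩ ⇑T ⁻¹' Γ ⊆ Sᶜ ∩ S := by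
      intro x hx
      refine ⟨?_, hx.1.2⟩
      have : x ∉ ⇑T ⁻¹' S' := hx.1.1
      rwa [hpreS'] at this
    refine le_antisymm (le_trans (measure_mono hsub) ?_) zero_le
    simp
  have hν_ac₀ : ν ≪ μ₀ := by
    refine Measure.AbsolutelyContinuous.mk fun A hA hA0 => ?_
    rw [hμ₀_def, Measure.restrict_apply hA] at hA0
    have h1 : ν (A ∩ S') = 0 := hν_ac (by rw [hμΓ_apply _ (hA.inter hS')] at hA0 ⊢; exact hA0)
    have hle : ν A ≤ ν (A ∩ S') + ν S'ᶜ := by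
      refine le_trans (measure_mono ?_) (measure_union_le _ _)
      intro x hx
      by_cases hx' : x ∈ S'
      · exact Or.inl ⟨hx, hx'⟩
      · exact Or.inr hx'
    refine le_antisymm ?_ zero_le
    simpa [h1, hν_S'c] using hle
  -- Radon-Nikodym
  set ρ : EuclideanSpace ℝ (Fin n) → ℝ≥0∞ := ν.rnDeriv μ₀ with hρ_def
  have hρ_meas : Measurable ρ := Measure.measurable_rnDeriv ν μ₀
  have hρ_eq : μ₀.withDensity ρ = ν := Measure.withDensity_rnDeriv_eq ν μ₀ hν_ac₀
  have hρ_lt : ∀ᵐ y ∂μ₀, ρ y < ∞ := Measure.rnDeriv_lt_top ν μ₀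
  set ρ' : EuclideanSpace ℝ (Fin n) → ℝ≥0 := fun y => (ρ y).toNNReal with hρ'_def
  have hρ'_meas : Measurable ρ' := hρ_meas.ennreal_toNNReal
  have hρ'_eq : μ₀.withDensity (fun y => (ρ' y : ℝ≥0∞)) = ν := by
    rw [withDensity_congr_ae (coe_toNNReal_ae_eq hρ_lt)]
    exact hρ_eq
  -- the transported function
  have hfT : Integrable (fun y => f (T.symm y)) ν := by
    refine ((T.toHomeomorph.toMeasurableEquiv).measurableEmbedding.integrable_map_iff).2 ?_
    have hcomp : ((fun y => f (T.symm y)) ∘ ⇑(T.toHomeomorph.toMeasurableEquiv)) = f := by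
      funext x
      simp [Homeomorph.toMeasurableEquiv_coe]
    rw [hcomp]
    exact hf.restrict
  have hsmul_int : Integrable (fun y => ρ' y • f (T.symm y)) μ₀ := by
    rw [← integrable_withDensity_iff_integrable_smul hρ'_meas, hρ'_eq]
    exact hfT
  set g : EuclideanSpace ℝ (Fin n) → ℂ :=
    S'.indicator (fun y => ρ' y • f (T.symm y)) with hg_def
  have hg_int : Integrable g μΓ := by
    rw [hg_def, integrable_indicator_iff hS']
    exact hsmul_int
  -- vanishing of transforms of g
  have hg_van : ∀ ξ ∈ Λ,
      ∫ y, Complex.exp (-Complex.I * ((inner ℝ ξ y : ℝ) : ℂ)) * g y ∂μΓ = 0 := by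
    intro ξ hξ
    set eξ : EuclideanSpace ℝ (Fin n) → ℂ :=
      fun y => Complex.exp (-Complex.I * ((inner ℝ ξ y : ℝ) : ℂ)) with he
    have step1 : (fun y => eξ y * g y)
        = S'.indicator (fun y => eξ y * (ρ' y • f (T.symm y))) := by
      funext y
      by_cases hy : y ∈ S' <;>
        simp [hg_def, Set.indicator_of_mem, Set.indicator_of_notMem, hy]
    have step2 : (fun y => eξ y * (ρ' y • f (T.symm y)))
        = fun y => ρ' y • (eξ y * f (T.symm y)) := by
      funext y; rw [mul_smul_comm]
    calc ∫ y, eξ y * g y ∂μΓ = ∫ y in S', eξ y * (ρ' y • f (T.symm y)) ∂μΓ := by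
          rw [step1, integral_indicator hS']
      _ = ∫ y, ρ' y • (eξ y * f (T.symm y)) ∂μ₀ := by rw [← hμ₀_def, step2]
      _ = ∫ y, eξ y * f (T.symm y) ∂(μ₀.withDensity (fun y => (ρ' y : ℝ≥0∞))) := by
          rw [integral_withDensity_eq_integral_smul hρ'_meas]
      _ = ∫ y, eξ y * f (T.symm y) ∂ν := by rw [hρ'_eq]
      _ = ∫ x, eξ (T x) * f (T.symm (T x)) ∂(μ'.restrict S) := by
          rw [hν_def]
          exact MeasureTheory.integral_map_equiv (T.toHomeomorph.toMeasurableEquiv)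
            (fun y => eξ y * f (T.symm y))
      _ = ∫ x in S, Complex.exp (-Complex.I *
            ((inner ℝ (adjoint (T : EuclideanSpace ℝ (Fin n) →L[ℝ]
              EuclideanSpace ℝ (Fin n)) ξ) x : ℝ) : ℂ)) * f x ∂μ' := by
          refine integral_congr_ae (ae_of_all _ fun x => ?_)
          rw [he]
          simp only [ContinuousLinearEquiv.symm_apply_apply]
          rw [ContinuousLinearMap.adjoint_inner_left]
          rfl
      _ = 0 := by
          set ξ' := adjoint (T : EuclideanSpace ℝ (Fin n) →L[ℝ]
            EuclideanSpace ℝ (Fin n)) ξ with hξ'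
          have hcont : Continuous fun x : EuclideanSpace ℝ (Fin n) =>
              Complex.exp (-Complex.I * ((inner ℝ ξ' x : ℝ) : ℂ)) := by
            have h1 : Continuous fun x : EuclideanSpace ℝ (Fin n) => (inner ℝ ξ' x : ℝ) :=
              continuous_const.inner continuous_id
            exact Complex.continuous_exp.comp
              (continuous_const.mul (Complex.continuous_ofReal.comp h1))
          have hinteg : Integrable (fun x =>
              Complex.exp (-Complex.I * ((inner ℝ ξ' x : ℝ) : ℂ)) * f x) μ' := by
            refine hf.bdd_mul (c := 1) hcont.aestronglyMeasurable (ae_of_all _ fun x => ?_)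
            simp [Complex.norm_exp]
          have hsplit := integral_add_compl hS hinteg
          have hcompl0 : ∫ x in Sᶜ,
              Complex.exp (-Complex.I * ((inner ℝ ξ' x : ℝ) : ℂ)) * f x ∂μ' = 0 := by
            have hz : (fun x => Complex.exp (-Complex.I * ((inner ℝ ξ' x : ℝ) : ℂ)) * f x)
                =ᵐ[μ'.restrict Sᶜ] 0 := by
              filter_upwards [hf_compl] with x hx
              simp [hx]
            rw [integral_congr_ae hz]
            simp
          have htot := hvan ξ' ⟨ξ, hξ, rfl⟩
          rw [hcompl0] at hsplit
          rw [add_zero] at hsplit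
          rw [hsplit]
          exact htot
  have hg0 : g =ᵐ[μΓ] 0 := h g hg_int hg_van
  -- conclude
  have hN : μΓ {y | g y ≠ 0} = 0 := by
    have := hg0
    rw [Filter.EventuallyEq, ae_iff] at this
    simpa using this
  have hνN : ν {y | g y ≠ 0} = 0 := hν_ac hN
  have hνZ : ν {y | ρ y = 0} = 0 := by
    have hZ : MeasurableSet {y | ρ y = 0} := hρ_meas (measurableSet_singleton 0)
    rw [← hρ_eq, withDensity_apply _ hZ]
    calc ∫⁻ y in {y | ρ y = 0}, ρ y ∂μ₀
        = ∫⁻ y in {y | ρ y = 0}, 0 ∂μ₀ :=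
          setLIntegral_congr_fun hZ (fun y hy => hy)
      _ = 0 := by simp
  have hνZtop : ν {y | ρ y = ∞} = 0 := by
    have hZ : MeasurableSet {y | ρ y = ∞} := hρ_meas (measurableSet_singleton ∞)
    have hμ₀Z : μ₀ {y | ρ y = ∞} = 0 := by
      have := hρ_lt
      rw [ae_iff] at this
      simpa [not_lt, top_le_iff] using this
    rw [← hρ_eq, withDensity_apply _ hZ, setLIntegral_measure_zero _ _ hμ₀Z]
  have hsub : S' ∩ {y | f (T.symm y) ≠ 0}
      ⊆ {y | g y ≠ 0} ∪ {y | ρ y = 0} ∪ {y | ρ y = ∞} := by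
    intro y hy
    by_cases h0 : ρ y = 0
    · exact Or.inl (Or.inr h0)
    by_cases htop : ρ y = ∞
    · exact Or.inr htop
    refine Or.inl (Or.inl ?_)
    have hρ'0 : ρ' y ≠ 0 := by
      simp only [hρ'_def, ne_eq, ENNReal.toNNReal_eq_zero_iff]
      tauto
    have hgy : g y = ρ' y • f (T.symm y) := Set.indicator_of_mem hy.1 _
    simp only [Set.mem_setOf_eq, hgy]
    exact smul_ne_zero hρ'0 hy.2
  have hν_fset : ν {y | f (T.symm y) ≠ 0} = 0 := by
    refine le_antisymm ?_ zero_le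
    calc ν {y | f (T.symm y) ≠ 0}
        ≤ ν ((S' ∩ {y | f (T.symm y) ≠ 0}) ∪ S'ᶜ) := by
          refine measure_mono fun y hy => ?_
          by_cases hy' : y ∈ S'
          · exact Or.inl ⟨hy', hy⟩
          · exact Or.inr hy'
      _ ≤ ν (S' ∩ {y | f (T.symm y) ≠ 0}) + ν S'ᶜ := measure_union_le _ _
      _ ≤ ν ({y | g y ≠ 0} ∪ {y | ρ y = 0} ∪ {y | ρ y = ∞}) + 0 := by
          rw [hν_S'c]
          exact add_le_add_left (measure_mono hsub) 0
      _ ≤ (ν ({y | g y ≠ 0} ∪ {y | ρ y = 0}) + ν {y | ρ y = ∞}) + 0 :=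
          add_le_add_left (measure_union_le _ _) 0
      _ ≤ ((ν {y | g y ≠ 0} + ν {y | ρ y = 0}) + ν {y | ρ y = ∞}) + 0 :=
          add_le_add_left (add_le_add_left (measure_union_le _ _) _) 0
      _ = 0 := by rw [hνN, hνZ, hνZtop]; simp
  have hfS0 : f =ᵐ[μ'.restrict S] 0 := by
    rw [Filter.EventuallyEq, ae_iff]
    refine le_antisymm ?_ zero_le
    have hpre : {x | ¬ f x = (0 : (fun _ => ℂ) x)} ⊆ ⇑T ⁻¹' {y | f (T.symm y) ≠ 0} := by
      intro x hx
      simp only [Set.mem_preimage, Set.mem_setOf_eq, ContinuousLinearEquiv.symm_apply_apply]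
      exact hx
    calc (μ'.restrict S) {x | ¬ f x = (0 : (fun _ => ℂ) x)}
        ≤ (μ'.restrict S) (⇑T ⁻¹' {y | f (T.symm y) ≠ 0}) := measure_mono hpre
      _ ≤ ν {y | f (T.symm y) ≠ 0} := Measure.le_map_apply hTmeas.aemeasurable _
      _ = 0 := hν_fset
  exact ae_of_ae_restrict_of_ae_restrict_compl S hfS0 hf_compl

/-- Invariance of Heisenberg uniqueness pairs under an invertible continuous linear
map `T` and the image of `Λ` under its adjoint. -/
theorem isHUP_linear_map_iff (n : ℕ) (hn : 2 ≤ n)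
    (Γ Λ : Set (EuclideanSpace ℝ (Fin n)))
    (T : EuclideanSpace ℝ (Fin n) ≃L[ℝ] EuclideanSpace ℝ (Fin n)) :
    IsHUP n Γ Λ ↔
      IsHUP n ((T : EuclideanSpace ℝ (Fin n) → EuclideanSpace ℝ (Fin n)) ⁻¹' Γ)
        (⇑(ContinuousLinearMap.adjoint
            (T : EuclideanSpace ℝ (Fin n) →L[ℝ] EuclideanSpace ℝ (Fin n))) '' Λ) := by
  constructor
  · exact fun h => hup_aux n hn Γ Λ T h
  · intro h
    have key := hup_aux n hn _ _ T.symm h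
    have h1 : (⇑T.symm ⁻¹' ((T : EuclideanSpace ℝ (Fin n) →
        EuclideanSpace ℝ (Fin n)) ⁻¹' Γ)) = Γ := by
      ext x; simp
    have h2 : (⇑(adjoint (T.symm : EuclideanSpace ℝ (Fin n) →L[ℝ] EuclideanSpace ℝ (Fin n))) ''
        (⇑(adjoint (T : EuclideanSpace ℝ (Fin n) →L[ℝ] EuclideanSpace ℝ (Fin n))) '' Λ)) = Λ := by
      rw [← Set.image_comp]
      have hcomp : ⇑(adjoint (T.symm : EuclideanSpace ℝ (Fin n) →L[ℝ] EuclideanSpace ℝ (Fin n))) ∘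
          ⇑(adjoint (T : EuclideanSpace ℝ (Fin n) →L[ℝ] EuclideanSpace ℝ (Fin n)))
          = _root_.id := by
        funext x
        refine ext_inner_right ℝ fun y => ?_
        simp only [Function.comp_apply, id_eq]
        rw [ContinuousLinearMap.adjoint_inner_left, ContinuousLinearMap.adjoint_inner_left]
        simp
      rw [hcomp, Set.image_id]
    rwa [h1, h2] at key
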